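/- For the two-state CTMC and any δ > 0, the probability of two or more transitions in [0,δ] starting from state 1 satisfies 1 - (α e^{-βδ} - β e^{-αδ})/(α - β) ≤ (1/2)αβδ². -/

import Mathlib

open Real

lemma key_exp (a b t : ℝ) (hb : 0 < b) (hab : b < a) (ht : 0 ≤ t) :
    exp (-b * t) - exp (-a * t) ≤ (a - b) * t := by
  have h1 : exp (-b * t) - exp (-a * t) = exp (-b * t) * (1 - exp (-((a - b) * t))) := by
    rw [mul_sub, mul_one, ← Real.exp_add]; ring_nf
  rw [h1]
  have hu : 0 ≤ (a - b) * t := mul_nonneg (by linarith) ht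
  have h2 : 1 - exp (-((a - b) * t)) ≤ (a - b) * t := by
    nlinarith [Real.add_one_le_exp (-((a - b) * t))]
  have h3 : exp (-b * t) ≤ 1 := by
    rw [Real.exp_le_one_iff]; nlinarith
  have h4 : 0 ≤ 1 - exp (-((a - b) * t)) := by
    have := Real.exp_le_one_iff.mpr (neg_nonpos.mpr hu)
    linarith
  nlinarith [Real.exp_pos (-b * t)]

lemma aux_two_jumps (a b δ : ℝ) (hb : 0 < b) (hab : b < a) (hδ : 0 < δ) :
    1 - (a * exp (-b * δ) - b * exp (-a * δ)) / (a - b) ≤ (1 / 2) * a * b * δ ^ 2 := by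
  have hab' : (0:ℝ) < a - b := by linarith
  set H : ℝ → ℝ := fun t => (1/2)*a*b*t^2 + (a * exp (-b*t) - b * exp (-a*t))/(a-b) with hH
  have hderiv : ∀ t : ℝ, HasDerivAt H
      ((1/2)*a*b*(2*t) + (a*(exp (-b*t)*(-b)) - b*(exp (-a*t)*(-a)))/(a-b)) t := by
    intro t
    have e1 : HasDerivAt (fun t : ℝ => exp (-b*t)) (exp (-b*t) * (-b)) t := by
      have := ((hasDerivAt_id t).const_mul (-b)).exp
      simpa using this
    have e2 : HasDerivAt (fun t : ℝ => exp (-a*t)) (exp (-a*t) * (-a)) t := by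
      have := ((hasDerivAt_id t).const_mul (-a)).exp
      simpa using this
    have p : HasDerivAt (fun t : ℝ => (1/2)*a*b*t^2) ((1/2)*a*b*(2*t)) t := by
      have := (hasDerivAt_pow 2 t).const_mul ((1/2)*a*b)
      simpa [mul_comm, mul_assoc, mul_left_comm] using this
    exact p.add (((e1.const_mul a).sub (e2.const_mul b)).div_const (a-b))
  have hmono : MonotoneOn H (Set.Ici (0:ℝ)) := by
    apply monotoneOn_of_deriv_nonneg (convex_Ici 0)
    · exact fun t _ => (hderiv t).continuousAt.continuousWithinAt
    · intro t _
      exact (hderiv t).differentiableAt.differentiableWithinAt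
    · intro t ht
      rw [interior_Ici] at ht
      have ht' : (0:ℝ) < t := ht
      rw [(hderiv t).deriv]
      have hk := key_exp a b t hb hab ht'.le
      have hdivle : (exp (-b*t) - exp (-a*t))/(a-b) ≤ t := by
        rw [div_le_iff₀ hab']; nlinarith
      have expand : (1/2)*a*b*(2*t) + (a*(exp (-b*t)*(-b)) - b*(exp (-a*t)*(-a)))/(a-b)
          = a*b*(t - (exp (-b*t) - exp (-a*t))/(a-b)) := by
        field_simp; ring
      rw [expand]
      have h5 : 0 ≤ t - (exp (-b*t) - exp (-a*t))/(a-b) := by linarith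
      exact mul_nonneg (mul_nonneg (by linarith) hb.le) h5
  have h0 : H 0 = 1 := by
    simp only [hH]
    norm_num
    exact hab'.ne'
  have hle : H 0 ≤ H δ := hmono (by simp) (by simp [hδ.le]) hδ.le
  rw [h0] at hle
  simp only [hH] at hle
  linarith

/-- For the two-state CTMC (rates `α` from state 1 and `β` from state 2) and any `δ > 0`,
the probability of two or more transitions in `[0, δ]` starting from state 1 satisfies
`1 - (α e^{-βδ} - β e^{-αδ})/(α - β) ≤ (1/2) α β δ²`. -/
theorem two_or_more_transitions_prob_le (α β δ : ℝ) (hα : 0 < α) (hβ : 0 < β)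
    (hαβ : α ≠ β) (hδ : 0 < δ) :
    1 - (α * exp (-β * δ) - β * exp (-α * δ)) / (α - β) ≤ (1 / 2) * α * β * δ ^ 2 := by
  rcases hαβ.lt_or_gt with h | h
  · have h2 := aux_two_jumps β α δ hα h hδ
    have heq : (β * exp (-α * δ) - α * exp (-β * δ)) / (β - α)
        = (α * exp (-β * δ) - β * exp (-α * δ)) / (α - β) := by
      rw [← neg_div_neg_eq]; ring_nf
    rw [heq] at h2
    nlinarith
  · exact aux_two_jumps α β δ hβ h hδ
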